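/- Let ε ∈ (0, π/6), let r₀ ∈ (1, √2), and let v₂, v₃ be potentials satisfying assumptions (i₂)–(iii₂) and (i₃)–(iv₃). Then for every integer n ≥ 1 and every configuration C_n of n distinct points in ℝ² minimizing the energy F among all n-point configurations, one has F(C_n) ≤ −2n + ⌈2√n⌉. -/

import Mathlib

open scoped Real

noncomputable section

abbrev Pt : Type := EuclideanSpace ℝ (Fin 2)

/-- The clockwise angle in `[0, 2π)` between the vectors `u` and `v`. -/
noncomputable def cwAngle (u v : Pt) : ℝ :=
  let a := Complex.arg ((⟨u 0, u 1⟩ : ℂ) * (starRingEnd ℂ) (⟨v 0, v 1⟩ : ℂ))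
  if a < 0 then a + 2 * π else a

/-- Assumptions (i₂)–(iii₂) on the two-body potential. -/
structure V2Hyp (ε r0 : ℝ) (v2 : ℝ → EReal) : Prop where
  eq_neg_one : v2 1 = -1
  ge_neg_one : ∀ r : ℝ, 0 ≤ r → -1 ≤ v2 r
  gt_neg_one : ∀ r : ℝ, 0 ≤ r → r ≠ 1 → -1 < v2 r
  eq_zero : ∀ r : ℝ, r0 ≤ r → v2 r = 0
  repulsive : ∀ r : ℝ, 0 ≤ r → r ≤ 1 - ε → ((ε⁻¹ : ℝ) : EReal) < v2 r

/-- Assumptions (i₃)–(iv₃) on the three-body potential. -/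
structure V3Hyp (ε : ℝ) (v3 : ℝ → ℝ) : Prop where
  symm : ∀ θ : ℝ, 0 ≤ θ → θ ≤ 2 * π → v3 θ = v3 (2 * π - θ)
  zero_pi_half : v3 (π / 2) = 0
  zero_pi : v3 π = 0
  zero_three_pi_half : v3 (3 * π / 2) = 0
  pos : ∀ θ : ℝ, 0 ≤ θ → θ ≤ 2 * π → θ ∉ ({π / 2, π, 3 * π / 2} : Set ℝ) → 0 < v3 θ
  slope : ∀ θ ∈ Set.Icc (π - ε) (π + ε), 4 * (π / 6 - ε)⁻¹ * |θ - π| ≤ v3 θ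
  slope_eq : ∀ θ ∈ Set.Icc (π - ε) (π + ε), v3 θ = 4 * (π / 6 - ε)⁻¹ * |θ - π| → θ = π
  large : ∀ θ : ℝ, 0 ≤ θ → θ ≤ 2 * π →
    θ ∉ Set.Icc (π / 2 - ε) (π / 2 + ε) ∪ Set.Icc (π - ε) (π + ε) ∪
        Set.Icc (3 * π / 2 - ε) (3 * π / 2 + ε) →
    4 / (1 - ε) ^ 2 * (Real.sqrt 2 + 1 / 2) ^ 2 < v3 θ

/-- The configurational energy `F(C_n)`. -/
noncomputable def energy (r0 : ℝ) (v2 : ℝ → EReal) (v3 : ℝ → ℝ) {n : ℕ}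
    (x : Fin n → Pt) : EReal :=
  ((1 / 2 : ℝ) : EReal) *
      ∑ i : Fin n, ∑ j : Fin n, (if j ≠ i then v2 (dist (x i) (x j)) else 0)
    + (((1 / 2 : ℝ) * ∑ i : Fin n, ∑ j : Fin n, ∑ k : Fin n,
        (if i ≠ j ∧ i ≠ k ∧ j ≠ k ∧ dist (x i) (x j) ≤ r0 ∧ dist (x i) (x k) ≤ r0
          then v3 (cwAngle (x j - x i) (x k - x i)) else 0) : ℝ) : EReal)

/-- `x` is an `n`-point configuration of minimal energy. -/
def IsMinimizer (r0 : ℝ) (v2 : ℝ → EReal) (v3 : ℝ → ℝ) {n : ℕ} (x : Fin n → Pt) : Prop :=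
  Function.Injective x ∧
    ∀ y : Fin n → Pt, Function.Injective y → energy r0 v2 v3 x ≤ energy r0 v2 v3 y


/- ===================== auxiliary machinery ===================== -/

namespace MinUB

/-! ### The square-grid competitor configuration -/

/-- grid point number `i`, in a grid with rows of length `m` -/
def gpt (m i : ℕ) : Pt := (WithLp.equiv 2 (Fin 2 → ℝ)).symm ![((i % m : ℕ) : ℝ), ((i / m : ℕ) : ℝ)]

@[simp] lemma gpt_apply0 (m i : ℕ) : gpt m i 0 = ((i % m : ℕ) : ℝ) := rfl
@[simp] lemma gpt_apply1 (m i : ℕ) : gpt m i 1 = ((i / m : ℕ) : ℝ) := rfl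

/-- squared distance between grid points, as an integer -/
def d2 (m i j : ℕ) : ℤ := (((i % m : ℕ) : ℤ) - ((j % m : ℕ) : ℤ))^2 + (((i / m : ℕ) : ℤ) - ((j / m : ℕ) : ℤ))^2

lemma dist_gpt (m i j : ℕ) : dist (gpt m i) (gpt m j) = Real.sqrt ((d2 m i j : ℤ) : ℝ) := by
  rw [EuclideanSpace.dist_eq, Fin.sum_univ_two]
  congr 1
  simp only [gpt_apply0, gpt_apply1, Real.dist_eq, sq_abs, d2,
    Int.cast_add, Int.cast_pow, Int.cast_sub, Int.cast_natCast]

lemma d2_nonneg (m i j : ℕ) : 0 ≤ d2 m i j := by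
  unfold d2; positivity

lemma d2_eq_zero {m i j : ℕ} (h : d2 m i j = 0) : i = j := by
  unfold d2 at h
  have h1 : (((i % m : ℕ) : ℤ) - ((j % m : ℕ) : ℤ)) = 0 ∧ (((i / m : ℕ) : ℤ) - ((j / m : ℕ) : ℤ)) = 0 := by
    constructor <;>
      nlinarith [sq_nonneg (((i % m : ℕ) : ℤ) - ((j % m : ℕ) : ℤ)),
        sq_nonneg (((i / m : ℕ) : ℤ) - ((j / m : ℕ) : ℤ))]
  obtain ⟨e1, e2⟩ := h1
  have e1' : i % m = j % m := by omega
  have e2' : i / m = j / m := by omega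
  have hi := Nat.div_add_mod i m
  rw [e1', e2'] at hi
  have := Nat.div_add_mod j m
  omega

lemma one_le_d2 {m i j : ℕ} (h : i ≠ j) : 1 ≤ d2 m i j := by
  rcases lt_or_eq_of_le (d2_nonneg m i j) with h' | h'
  · omega
  · exact absurd (d2_eq_zero h'.symm) h

lemma dist_gpt_of_d2_one {m i j : ℕ} (h : d2 m i j = 1) : dist (gpt m i) (gpt m j) = 1 := by
  rw [dist_gpt, h]; simp

lemma sqrt_two_le_dist {m i j : ℕ} (h : 2 ≤ d2 m i j) :
    Real.sqrt 2 ≤ dist (gpt m i) (gpt m j) := by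
  rw [dist_gpt]
  exact Real.sqrt_le_sqrt (by exact_mod_cast h)

lemma gpt_injective (m : ℕ) : Function.Injective (gpt m) := by
  intro i j hij
  have h0 : ((i % m : ℕ) : ℝ) = ((j % m : ℕ) : ℝ) := by
    have := congrArg (fun p : Pt => p 0) hij; simpa using this
  have h1 : ((i / m : ℕ) : ℝ) = ((j / m : ℕ) : ℝ) := by
    have := congrArg (fun p : Pt => p 1) hij; simpa using this
  have e0 : i % m = j % m := by exact_mod_cast h0
  have e1 : i / m = j / m := by exact_mod_cast h1
  have hi := Nat.div_add_mod i m
  rw [e0, e1] at hi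
  have := Nat.div_add_mod j m
  omega

/-! ### Angles between unit grid vectors -/

lemma int_unit_sq {a b : ℤ} (h : a^2 + b^2 = 1) :
    (a = 1 ∧ b = 0) ∨ (a = -1 ∧ b = 0) ∨ (a = 0 ∧ b = 1) ∨ (a = 0 ∧ b = -1) := by
  have ha : -1 ≤ a ∧ a ≤ 1 := by constructor <;> nlinarith [sq_nonneg b, sq_nonneg (a-1), sq_nonneg (a+1)]
  have hb : -1 ≤ b ∧ b ≤ 1 := by constructor <;> nlinarith [sq_nonneg a, sq_nonneg (b-1), sq_nonneg (b+1)]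
  obtain ⟨ha1, ha2⟩ := ha; obtain ⟨hb1, hb2⟩ := hb
  interval_cases a <;> interval_cases b <;> omega

def IsUnitVec (u : Pt) : Prop :=
  (u 0 = 1 ∧ u 1 = 0) ∨ (u 0 = -1 ∧ u 1 = 0) ∨ (u 0 = 0 ∧ u 1 = 1) ∨ (u 0 = 0 ∧ u 1 = -1)

lemma unit_of_d2 {m i j : ℕ} (h : d2 m i j = 1) : IsUnitVec (gpt m j - gpt m i) := by
  have h0 : (gpt m j - gpt m i) 0 = ((j % m : ℕ) : ℝ) - ((i % m : ℕ) : ℝ) := by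
    simp [gpt]
  have h1 : (gpt m j - gpt m i) 1 = ((j / m : ℕ) : ℝ) - ((i / m : ℕ) : ℝ) := by
    simp [gpt]
  set a : ℤ := ((j % m : ℕ) : ℤ) - ((i % m : ℕ) : ℤ) with ha
  set b : ℤ := ((j / m : ℕ) : ℤ) - ((i / m : ℕ) : ℤ) with hb
  have hab : a^2 + b^2 = 1 := by unfold d2 at h; rw [ha, hb]; ring_nf; ring_nf at h; linarith
  have h0' : (gpt m j - gpt m i) 0 = (a : ℝ) := by rw [h0, ha, Int.cast_sub, Int.cast_natCast, Int.cast_natCast]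
  have h1' : (gpt m j - gpt m i) 1 = (b : ℝ) := by rw [h1, hb, Int.cast_sub, Int.cast_natCast, Int.cast_natCast]
  unfold IsUnitVec
  rcases int_unit_sq hab with ⟨e1, e2⟩ | ⟨e1, e2⟩ | ⟨e1, e2⟩ | ⟨e1, e2⟩ <;>
    rw [e1] at h0' <;> rw [e2] at h1' <;> norm_num at h0' h1' <;> tauto

lemma prod_mem {c1 c2 : ℂ}
    (h1 : c1 = 1 ∨ c1 = -1 ∨ c1 = Complex.I ∨ c1 = -Complex.I)
    (h2 : c2 = 1 ∨ c2 = -1 ∨ c2 = Complex.I ∨ c2 = -Complex.I)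
    (hne : c1 ≠ c2) :
    c1 * (starRingEnd ℂ) c2 = -1 ∨ c1 * (starRingEnd ℂ) c2 = Complex.I ∨
      c1 * (starRingEnd ℂ) c2 = -Complex.I := by
  rcases h1 with rfl | rfl | rfl | rfl <;> rcases h2 with rfl | rfl | rfl | rfl <;>
    simp_all [Complex.conj_I, Complex.ext_iff]

lemma complex_mem {u : Pt} (hu : IsUnitVec u) :
    (⟨u 0, u 1⟩ : ℂ) = 1 ∨ (⟨u 0, u 1⟩ : ℂ) = -1 ∨ (⟨u 0, u 1⟩ : ℂ) = Complex.I ∨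
      (⟨u 0, u 1⟩ : ℂ) = -Complex.I := by
  rcases hu with ⟨h0, h1⟩ | ⟨h0, h1⟩ | ⟨h0, h1⟩ | ⟨h0, h1⟩ <;>
    simp [Complex.ext_iff, h0, h1]

lemma cwAngle_unit {u v : Pt} (hu : IsUnitVec u) (hv : IsUnitVec v) (hne : u ≠ v) :
    cwAngle u v = π ∨ cwAngle u v = π / 2 ∨ cwAngle u v = 3 * π / 2 := by
  have hcne : (⟨u 0, u 1⟩ : ℂ) ≠ (⟨v 0, v 1⟩ : ℂ) := by
    intro h
    apply hne
    have h0 : u 0 = v 0 := congrArg Complex.re h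
    have h1 : u 1 = v 1 := congrArg Complex.im h
    ext t
    fin_cases t
    · exact h0
    · exact h1
  have := prod_mem (complex_mem hu) (complex_mem hv) hcne
  unfold cwAngle
  rcases this with h | h | h <;> rw [h]
  · rw [Complex.arg_neg_one, if_neg (not_lt.mpr Real.pi_pos.le)]
    left; rfl
  · rw [Complex.arg_I, if_neg (not_lt.mpr (by positivity))]
    right; left; rfl
  · rw [Complex.arg_neg_I, if_pos (neg_lt_zero.mpr (by positivity))]
    right; right; ring

/-! ### combinatorics of grid neighbours -/

lemma succ_same_row {m i : ℕ} (h : (i+1) % m ≠ 0) :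
    (i+1) % m = i % m + 1 ∧ (i+1) / m = i / m := by
  rcases Nat.eq_zero_or_pos m with hm | hm
  · subst hm; simp
  · by_cases hc : i % m + 1 = m
    · exfalso
      have key : i + 1 = m * (i / m + 1) := by
        have h1 := Nat.div_add_mod i m
        have h2 : m * (i / m + 1) = m * (i / m) + m := by ring
        omega
      rw [key] at h
      simp [Nat.mul_mod_right] at h
    · have hlt : i % m + 1 < m := by
        have := Nat.mod_lt i hm; omega
      have key : i + 1 = m * (i / m) + (i % m + 1) := by
        have := Nat.div_add_mod i m; omega
      constructor
      · rw [key, Nat.mul_add_mod, Nat.mod_eq_of_lt hlt]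
      · rw [key, Nat.mul_add_div hm, Nat.div_eq_of_lt hlt, add_zero]

lemma d2_comm (m i j : ℕ) : d2 m i j = d2 m j i := by unfold d2; ring

lemma d2_succ {m i : ℕ} (h : (i+1) % m ≠ 0) : d2 m i (i+1) = 1 := by
  obtain ⟨h1, h2⟩ := succ_same_row h
  unfold d2
  rw [h1, h2]
  push_cast
  ring

lemma d2_add_m {m : ℕ} (hm : 1 ≤ m) (i : ℕ) : d2 m i (i+m) = 1 := by
  unfold d2
  rw [Nat.add_mod_right, Nat.add_div_right _ hm]
  push_cast
  ring

/-- pointwise bound on the pair interaction indicator -/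
lemma f2_le_h {m : ℕ} (hm : 1 ≤ m) (i j : ℕ) :
    (if d2 m i j = 1 then (-1:ℝ) else 0) ≤
      (if (j = i+1 ∧ (i+1) % m ≠ 0) then (-1:ℝ) else 0)
      + (if (j = i-1 ∧ (1 ≤ i ∧ i % m ≠ 0)) then (-1:ℝ) else 0)
      + (if (j = i+m ∧ True) then (-1:ℝ) else 0)
      + (if (j = i-m ∧ m ≤ i) then (-1:ℝ) else 0) := by
  by_cases h1 : j = i+1 ∧ (i+1) % m ≠ 0
  · have n2 : ¬(j = i-1 ∧ (1 ≤ i ∧ i % m ≠ 0)) := by omega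
    have n3 : ¬(j = i+m ∧ True) := by
      rintro ⟨h3, -⟩
      have hm1 : m = 1 := by omega
      rw [hm1] at h1
      simp [Nat.mod_one] at h1
    have n4 : ¬(j = i-m ∧ m ≤ i) := by omega
    rw [if_pos h1, if_neg n2, if_neg n3, if_neg n4,
      if_pos (h1.1 ▸ d2_succ h1.2)]
    norm_num
  · rw [if_neg h1]
    by_cases h2 : j = i-1 ∧ (1 ≤ i ∧ i % m ≠ 0)
    · have n3 : ¬(j = i+m ∧ True) := by omega
      have n4 : ¬(j = i-m ∧ m ≤ i) := by
        rintro ⟨h4, hmi⟩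
        have hm1 : m = 1 := by omega
        rw [hm1] at h2
        simp [Nat.mod_one] at h2
      have hij : i = j + 1 := by omega
      have hd : d2 m i j = 1 := by
        rw [d2_comm, hij]
        exact d2_succ (by rw [← hij]; exact h2.2.2)
      rw [if_pos h2, if_neg n3, if_neg n4, if_pos hd]
      norm_num
    · rw [if_neg h2]
      by_cases h3 : j = i+m ∧ True
      · have n4 : ¬(j = i-m ∧ m ≤ i) := by omega
        rw [if_pos h3, if_neg n4, if_pos (h3.1 ▸ d2_add_m hm i)]
        norm_num
      · rw [if_neg h3]
        by_cases h4 : j = i-m ∧ m ≤ i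
        · have hij : i = j + m := by omega
          have hd : d2 m i j = 1 := by rw [d2_comm, hij]; exact d2_add_m hm j
          rw [if_pos h4, if_pos hd]
          norm_num
        · rw [if_neg h4]
          split_ifs <;> norm_num

/-! ### summation helpers -/

lemma sum_fin_ite (n t : ℕ) (Q : Prop) [Decidable Q] :
    ∑ j : Fin n, (if ((j:ℕ) = t ∧ Q) then (-1:ℝ) else 0)
      = if (t < n ∧ Q) then (-1:ℝ) else 0 := by
  by_cases hQ : Q
  · simp only [hQ, and_true]
    by_cases ht : t < n
    · rw [if_pos ht, Finset.sum_eq_single (⟨t, ht⟩ : Fin n)]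
      · simp
      · intro b _ hb
        rw [if_neg]
        intro hv; apply hb; exact Fin.ext hv
      · intro habs; exact absurd (Finset.mem_univ _) habs
    · rw [if_neg ht, Finset.sum_eq_zero]
      intro j _
      rw [if_neg]
      intro hv; exact ht (hv ▸ j.isLt)
  · simp [hQ]

lemma Sc (n m : ℕ) :
    ∑ i ∈ Finset.range n, (if i + m < n then (-1:ℝ) else 0) = -((n - m : ℕ) : ℝ) := by
  have step : ∀ i, (if i + m < n then (-1:ℝ) else 0) = -(if i + m < n then (1:ℝ) else 0) := by
    intro i; split_ifs <;> norm_num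
  rw [Finset.sum_congr rfl (fun i _ => step i), Finset.sum_neg_distrib, Finset.sum_boole]
  have : Finset.filter (fun i => i + m < n) (Finset.range n) = Finset.range (n - m) := by
    ext a; simp only [Finset.mem_filter, Finset.mem_range]; omega
  rw [this, Finset.card_range]

lemma Sd (n m : ℕ) :
    ∑ i ∈ Finset.range n, (if m ≤ i then (-1:ℝ) else 0) = -((n - m : ℕ) : ℝ) := by
  have step : ∀ i, (if m ≤ i then (-1:ℝ) else 0) = -(if m ≤ i then (1:ℝ) else 0) := by
    intro i; split_ifs <;> norm_num
  rw [Finset.sum_congr rfl (fun i _ => step i), Finset.sum_neg_distrib, Finset.sum_boole]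
  have : Finset.filter (fun i => m ≤ i) (Finset.range n) = Finset.Ico m n := by
    ext a; simp only [Finset.mem_filter, Finset.mem_range, Finset.mem_Ico]; omega
  rw [this, Nat.card_Ico]

lemma L1 (m N : ℕ) :
    ∑ j ∈ Finset.range N, (if (j+1) % m ≠ 0 then (-1:ℝ) else 0)
      = ((N / m : ℕ) : ℝ) - (N : ℝ) := by
  have step : ∀ j, (if (j+1) % m ≠ 0 then (-1:ℝ) else 0)
      = (if m ∣ (j+1) then (1:ℝ) else 0) - 1 := by
    intro j
    by_cases h : (j+1) % m = 0
    · rw [if_neg (by simpa using h), if_pos (Nat.dvd_iff_mod_eq_zero.mpr h)]; norm_num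
    · rw [if_pos h, if_neg (fun hd => h (Nat.dvd_iff_mod_eq_zero.mp hd))]; norm_num
  rw [Finset.sum_congr rfl (fun j _ => step j), Finset.sum_sub_distrib,
    Finset.sum_boole, Nat.card_multiples, Finset.sum_const, Finset.card_range]
  simp

lemma Sa (n m : ℕ) :
    ∑ i ∈ Finset.range n, (if (i+1 < n ∧ (i+1) % m ≠ 0) then (-1:ℝ) else 0)
      = (((n-1) / m : ℕ) : ℝ) - ((n - 1 : ℕ) : ℝ) := by
  rw [← L1 m (n-1)]
  rw [← Finset.sum_subset (Finset.range_subset_range.mpr (show n - 1 ≤ n by omega))]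
  · exact Finset.sum_congr rfl (fun i hi => by
      rw [Finset.mem_range] at hi
      rw [if_congr (and_iff_right (by omega)) rfl rfl])
  · intro i hi hni
    rw [Finset.mem_range] at hi
    rw [Finset.mem_range] at hni
    rw [if_neg]; omega

lemma Sb (n m : ℕ) (hn : 1 ≤ n) :
    ∑ i ∈ Finset.range n, (if (1 ≤ i ∧ i % m ≠ 0) then (-1:ℝ) else 0)
      = (((n-1) / m : ℕ) : ℝ) - ((n - 1 : ℕ) : ℝ) := by
  obtain ⟨N, rfl⟩ : ∃ N, n = N + 1 := ⟨n - 1, by omega⟩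
  rw [Finset.sum_range_succ']
  simp only [Nat.add_sub_cancel]
  rw [← L1 m N]
  have : (if ((1:ℕ) ≤ 0 ∧ 0 % m ≠ 0) then (-1:ℝ) else 0) = 0 := by norm_num
  rw [this, add_zero]
  exact Finset.sum_congr rfl (fun j _ => by
    rw [if_congr (and_iff_right (by omega)) rfl rfl])

/-! ### the integer ceiling bound -/

lemma ceil_bound (n : ℕ) (hn : 1 ≤ n) :
    (((n-1) / ⌈Real.sqrt n⌉₊ + ⌈Real.sqrt n⌉₊ + 1 : ℕ) : ℤ) ≤ ⌈2 * Real.sqrt n⌉ := by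
  set m := ⌈Real.sqrt n⌉₊ with hm
  have hs0 : (0:ℝ) ≤ Real.sqrt n := Real.sqrt_nonneg _
  have hs2 : Real.sqrt n ^ 2 = (n:ℝ) := Real.sq_sqrt (by positivity)
  have hm1 : 1 ≤ m := by
    rw [hm]
    exact Nat.one_le_ceil_iff.mpr (Real.sqrt_pos.mpr (by exact_mod_cast hn))
  have hub : (n:ℝ) ≤ (m:ℝ)^2 := by
    have h1 : Real.sqrt n ≤ (m:ℝ) := Nat.le_ceil _
    nlinarith
  have hnm2 : n ≤ m * m := by
    have : (n:ℝ) ≤ ((m*m : ℕ) : ℝ) := by push_cast; nlinarith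
    exact_mod_cast this
  have hlb : ((m:ℝ) - 1)^2 < (n:ℝ) := by
    have h1 : ((m - 1 : ℕ) : ℝ) < Real.sqrt n := by
      rw [← Nat.lt_ceil, ← hm]; omega
    have h2 : ((m - 1 : ℕ) : ℝ) = (m:ℝ) - 1 := by
      push_cast [Nat.cast_sub hm1]; ring
    nlinarith
  set D := (n-1) / m with hD
  have key : ((D + m : ℕ) : ℝ) < 2 * Real.sqrt n := by
    by_cases hcase : m * m < n + m
    · have hDle : D < m := by
        rw [hD, Nat.div_lt_iff_lt_mul (by omega)]
        omega
      have h1 : ((D + m : ℕ) : ℝ) ≤ 2 * (m:ℝ) - 1 := by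
        have hnat : D + m ≤ 2 * m - 1 := by omega
        have h2 : ((D + m : ℕ):ℝ) ≤ ((2*m - 1 : ℕ):ℝ) := by exact_mod_cast hnat
        have h3 : ((2*m - 1 : ℕ):ℝ) = 2*(m:ℝ) - 1 := by
          push_cast [Nat.cast_sub (show 1 ≤ 2*m by omega)]; ring
        linarith
      have h4 : 4 * (n:ℝ) ≥ 4 * (m:ℝ)^2 - 4*(m:ℝ) + 4 := by
        have hnat : m*m + 1 ≤ n + m := hcase
        have hcast : ((m*m + 1 : ℕ) : ℝ) ≤ ((n + m : ℕ) : ℝ) := by exact_mod_cast hnat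
        push_cast at hcast
        nlinarith
      nlinarith [hs2, hs0, hm1, sq_nonneg (2*Real.sqrt n + 2*(m:ℝ) - 1)]
    · push_neg at hcase
      have hm2 : 2 ≤ m := by nlinarith
      have hDle : D < m - 1 := by
        rw [hD, Nat.div_lt_iff_lt_mul (by omega)]
        have : (m-1) * m = m*m - m := Nat.sub_one_mul m m
        omega
      have h1 : ((D + m : ℕ) : ℝ) ≤ 2 * (m:ℝ) - 2 := by
        have hnat : D + m ≤ 2 * m - 2 := by omega
        have h2 : ((D + m : ℕ):ℝ) ≤ ((2*m - 2 : ℕ):ℝ) := by exact_mod_cast hnat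
        have h3 : ((2*m - 2 : ℕ):ℝ) = 2*(m:ℝ) - 2 := by
          push_cast [Nat.cast_sub (show 2 ≤ 2*m by omega)]; ring
        linarith
      nlinarith
  have hlt : ((D + m : ℕ) : ℤ) < ⌈2 * Real.sqrt n⌉ := by
    rw [Int.lt_ceil]
    exact_mod_cast key
  push_cast at hlt ⊢
  omega

/-! ### EReal coercion of sums -/

lemma coe_sum {α : Type*} (s : Finset α) (f : α → ℝ) :
    ((∑ a ∈ s, f a : ℝ) : EReal) = ∑ a ∈ s, ((f a : ℝ) : EReal) :=
  map_sum (⟨⟨fun x : ℝ => (x : EReal), EReal.coe_zero⟩, fun x y => EReal.coe_add x y⟩ : ℝ →+ EReal) f s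

/-! ### energy of the grid configuration -/

lemma term2 {ε r0 : ℝ} {v2 : ℝ → EReal} (hv2 : V2Hyp ε r0 v2) (hr0' : r0 < Real.sqrt 2)
    {n m : ℕ} (i j : Fin n) :
    (if j ≠ i then v2 (dist (gpt m (i:ℕ)) (gpt m (j:ℕ))) else 0)
      = (((if d2 m (i:ℕ) (j:ℕ) = 1 then (-1:ℝ) else 0) : ℝ) : EReal) := by
  by_cases hij : j = i
  · subst hij
    rw [if_neg (by simp), if_neg (by unfold d2; simp)]
    simp
  · rw [if_pos hij]
    have hvne : (i:ℕ) ≠ (j:ℕ) := fun h => hij (Fin.ext h.symm)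
    by_cases hd : d2 m (i:ℕ) (j:ℕ) = 1
    · rw [if_pos hd, dist_gpt_of_d2_one hd, hv2.eq_neg_one]
      simp
    · have hge : 2 ≤ d2 m (i:ℕ) (j:ℕ) := by have := one_le_d2 (m := m) hvne; omega
      rw [if_neg hd, hv2.eq_zero _ (le_trans hr0'.le (sqrt_two_le_dist hge))]
      simp

lemma term3 {ε r0 : ℝ} {v3 : ℝ → ℝ} (hv3 : V3Hyp ε v3) (hr0' : r0 < Real.sqrt 2)
    {n m : ℕ} (i j k : Fin n) :
    (if (i ≠ j ∧ i ≠ k ∧ j ≠ k ∧ dist (gpt m (i:ℕ)) (gpt m (j:ℕ)) ≤ r0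
          ∧ dist (gpt m (i:ℕ)) (gpt m (k:ℕ)) ≤ r0)
      then v3 (cwAngle (gpt m (j:ℕ) - gpt m (i:ℕ)) (gpt m (k:ℕ) - gpt m (i:ℕ))) else 0) = 0 := by
  by_cases hc : (i ≠ j ∧ i ≠ k ∧ j ≠ k ∧ dist (gpt m (i:ℕ)) (gpt m (j:ℕ)) ≤ r0
          ∧ dist (gpt m (i:ℕ)) (gpt m (k:ℕ)) ≤ r0)
  · rw [if_pos hc]
    obtain ⟨hij, hik, hjk, hdj, hdk⟩ := hc
    have hone : ∀ l : Fin n, i ≠ l → dist (gpt m (i:ℕ)) (gpt m (l:ℕ)) ≤ r0 →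
        d2 m (i:ℕ) (l:ℕ) = 1 := by
      intro l hil hdl
      have h1 := one_le_d2 (m := m) (show (i:ℕ) ≠ (l:ℕ) from fun h => hil (Fin.ext h))
      by_contra hne
      have h2 : 2 ≤ d2 m (i:ℕ) (l:ℕ) := by omega
      have h3 := sqrt_two_le_dist (m := m) h2
      linarith [h3.trans hdl]
    have hu := unit_of_d2 (hone j hij hdj)
    have hv := unit_of_d2 (hone k hik hdk)
    have hne : gpt m (j:ℕ) - gpt m (i:ℕ) ≠ gpt m (k:ℕ) - gpt m (i:ℕ) := by
      intro h
      exact hjk (Fin.ext (gpt_injective m (sub_left_inj.mp h)))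
    rcases cwAngle_unit hu hv hne with h | h | h <;> rw [h]
    · exact hv3.zero_pi
    · exact hv3.zero_pi_half
    · exact hv3.zero_three_pi_half
  · rw [if_neg hc]

lemma energy_grid_le {ε r0 : ℝ} {v2 : ℝ → EReal} {v3 : ℝ → ℝ}
    (hv2 : V2Hyp ε r0 v2) (hv3 : V3Hyp ε v3) (hr0' : r0 < Real.sqrt 2)
    (n m : ℕ) (hn : 1 ≤ n) (hm : 1 ≤ m) :
    energy r0 v2 v3 (fun i : Fin n => gpt m (i:ℕ))
      ≤ (((((n-1)/m : ℕ) : ℝ) - ((n-1 : ℕ) : ℝ) - ((n-m : ℕ) : ℝ) : ℝ) : EReal) := by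
  unfold energy
  beta_reduce
  have h3 : (∑ i : Fin n, ∑ j : Fin n, ∑ k : Fin n,
      (if (i ≠ j ∧ i ≠ k ∧ j ≠ k ∧ dist (gpt m (i:ℕ)) (gpt m (j:ℕ)) ≤ r0
            ∧ dist (gpt m (i:ℕ)) (gpt m (k:ℕ)) ≤ r0)
        then v3 (cwAngle (gpt m (j:ℕ) - gpt m (i:ℕ)) (gpt m (k:ℕ) - gpt m (i:ℕ))) else 0) : ℝ) = 0 :=
    Finset.sum_eq_zero (fun i _ => Finset.sum_eq_zero (fun j _ => Finset.sum_eq_zero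
      (fun k _ => term3 hv3 hr0' i j k)))
  rw [h3]
  have h2 : (∑ i : Fin n, ∑ j : Fin n, (if j ≠ i then v2 (dist (gpt m (i:ℕ)) (gpt m (j:ℕ))) else 0))
      = ((∑ i : Fin n, ∑ j : Fin n, (if d2 m (i:ℕ) (j:ℕ) = 1 then (-1:ℝ) else 0) : ℝ) : EReal) := by
    rw [coe_sum]
    refine Finset.sum_congr rfl (fun i _ => ?_)
    rw [coe_sum]
    exact Finset.sum_congr rfl (fun j _ => (term2 hv2 hr0' i j).symm) |>.symm
  rw [h2, ← EReal.coe_mul, ← EReal.coe_add]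
  rw [EReal.coe_le_coe_iff]
  have hS2 : (∑ i : Fin n, ∑ j : Fin n, (if d2 m (i:ℕ) (j:ℕ) = 1 then (-1:ℝ) else 0) : ℝ)
      ≤ 2 * ((((n-1)/m : ℕ) : ℝ) - ((n-1 : ℕ) : ℝ)) - 2 * ((n-m : ℕ) : ℝ) := by
    have step1 : (∑ i : Fin n, ∑ j : Fin n, (if d2 m (i:ℕ) (j:ℕ) = 1 then (-1:ℝ) else 0) : ℝ)
        ≤ ∑ i : Fin n, ∑ j : Fin n,
            ((if ((j:ℕ) = (i:ℕ)+1 ∧ ((i:ℕ)+1) % m ≠ 0) then (-1:ℝ) else 0)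
            + (if ((j:ℕ) = (i:ℕ)-1 ∧ (1 ≤ (i:ℕ) ∧ (i:ℕ) % m ≠ 0)) then (-1:ℝ) else 0)
            + (if ((j:ℕ) = (i:ℕ)+m ∧ True) then (-1:ℝ) else 0)
            + (if ((j:ℕ) = (i:ℕ)-m ∧ m ≤ (i:ℕ)) then (-1:ℝ) else 0)) :=
      Finset.sum_le_sum (fun i _ => Finset.sum_le_sum (fun j _ => f2_le_h hm (i:ℕ) (j:ℕ)))
    have step2 : ∀ t : ℕ, (∑ j : Fin n,
            ((if ((j:ℕ) = t+1 ∧ (t+1) % m ≠ 0) then (-1:ℝ) else 0)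
            + (if ((j:ℕ) = t-1 ∧ (1 ≤ t ∧ t % m ≠ 0)) then (-1:ℝ) else 0)
            + (if ((j:ℕ) = t+m ∧ True) then (-1:ℝ) else 0)
            + (if ((j:ℕ) = t-m ∧ m ≤ t) then (-1:ℝ) else 0)))
        = (if (t+1 < n ∧ (t+1) % m ≠ 0) then (-1:ℝ) else 0)
            + (if (t-1 < n ∧ (1 ≤ t ∧ t % m ≠ 0)) then (-1:ℝ) else 0)
            + (if (t+m < n ∧ True) then (-1:ℝ) else 0)
            + (if (t-m < n ∧ m ≤ t) then (-1:ℝ) else 0) := by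
      intro t
      rw [Finset.sum_add_distrib, Finset.sum_add_distrib, Finset.sum_add_distrib,
        sum_fin_ite, sum_fin_ite, sum_fin_ite, sum_fin_ite]
    refine step1.trans ?_
    have step2' : (∑ i : Fin n, ∑ j : Fin n,
            ((if ((j:ℕ) = (i:ℕ)+1 ∧ ((i:ℕ)+1) % m ≠ 0) then (-1:ℝ) else 0)
            + (if ((j:ℕ) = (i:ℕ)-1 ∧ (1 ≤ (i:ℕ) ∧ (i:ℕ) % m ≠ 0)) then (-1:ℝ) else 0)
            + (if ((j:ℕ) = (i:ℕ)+m ∧ True) then (-1:ℝ) else 0)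
            + (if ((j:ℕ) = (i:ℕ)-m ∧ m ≤ (i:ℕ)) then (-1:ℝ) else 0)))
        = ∑ i : Fin n,
        ((if ((i:ℕ)+1 < n ∧ ((i:ℕ)+1) % m ≠ 0) then (-1:ℝ) else 0)
          + (if ((i:ℕ)-1 < n ∧ (1 ≤ (i:ℕ) ∧ (i:ℕ) % m ≠ 0)) then (-1:ℝ) else 0)
          + (if ((i:ℕ)+m < n ∧ True) then (-1:ℝ) else 0)
          + (if ((i:ℕ)-m < n ∧ m ≤ (i:ℕ)) then (-1:ℝ) else 0)) :=
      Finset.sum_congr rfl (fun i _ => step2 (i:ℕ))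
    rw [step2']
    have step3 : (∑ i : Fin n,
        ((if ((i:ℕ)+1 < n ∧ ((i:ℕ)+1) % m ≠ 0) then (-1:ℝ) else 0)
          + (if ((i:ℕ)-1 < n ∧ (1 ≤ (i:ℕ) ∧ (i:ℕ) % m ≠ 0)) then (-1:ℝ) else 0)
          + (if ((i:ℕ)+m < n ∧ True) then (-1:ℝ) else 0)
          + (if ((i:ℕ)-m < n ∧ m ≤ (i:ℕ)) then (-1:ℝ) else 0)))
        = ∑ t ∈ Finset.range n,
        ((if (t+1 < n ∧ (t+1) % m ≠ 0) then (-1:ℝ) else 0)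
          + (if (t-1 < n ∧ (1 ≤ t ∧ t % m ≠ 0)) then (-1:ℝ) else 0)
          + (if (t+m < n ∧ True) then (-1:ℝ) else 0)
          + (if (t-m < n ∧ m ≤ t) then (-1:ℝ) else 0)) :=
      Fin.sum_univ_eq_sum_range (fun t =>
        ((if (t+1 < n ∧ (t+1) % m ≠ 0) then (-1:ℝ) else 0)
          + (if (t-1 < n ∧ (1 ≤ t ∧ t % m ≠ 0)) then (-1:ℝ) else 0)
          + (if (t+m < n ∧ True) then (-1:ℝ) else 0)
          + (if (t-m < n ∧ m ≤ t) then (-1:ℝ) else 0))) n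
    rw [step3, Finset.sum_add_distrib, Finset.sum_add_distrib, Finset.sum_add_distrib]
    have e2 : ∑ t ∈ Finset.range n, (if (t-1 < n ∧ (1 ≤ t ∧ t % m ≠ 0)) then (-1:ℝ) else 0)
        = ∑ t ∈ Finset.range n, (if (1 ≤ t ∧ t % m ≠ 0) then (-1:ℝ) else 0) :=
      Finset.sum_congr rfl (fun t ht => by
        rw [Finset.mem_range] at ht
        rw [if_congr (and_iff_right (by omega)) rfl rfl])
    have e3 : ∑ t ∈ Finset.range n, (if (t+m < n ∧ True) then (-1:ℝ) else 0)
        = ∑ t ∈ Finset.range n, (if t+m < n then (-1:ℝ) else 0) :=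
      Finset.sum_congr rfl (fun t ht => by rw [if_congr (iff_of_eq (and_true _)) rfl rfl])
    have e4 : ∑ t ∈ Finset.range n, (if (t-m < n ∧ m ≤ t) then (-1:ℝ) else 0)
        = ∑ t ∈ Finset.range n, (if m ≤ t then (-1:ℝ) else 0) :=
      Finset.sum_congr rfl (fun t ht => by
        rw [Finset.mem_range] at ht
        rw [if_congr (and_iff_right_of_imp (fun _ => by omega)) rfl rfl])
    rw [e2, e3, e4, Sa n m, Sb n m hn, Sc n m, Sd n m]
    ring_nf
    linarith
  nlinarith [hS2]

end MinUB

/-- **Upper bound for minimizers.** Every `n`-point ground state has energy at most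
`−2n + ⌈2√n⌉`. -/
theorem minimizer_upper_bound (ε : ℝ) (hε0 : 0 < ε) (hε : ε < π / 6)
    (r0 : ℝ) (hr0 : 1 < r0) (hr0' : r0 < Real.sqrt 2)
    (v2 : ℝ → EReal) (v3 : ℝ → ℝ) (hv2 : V2Hyp ε r0 v2) (hv3 : V3Hyp ε v3)
    (n : ℕ) (hn : 1 ≤ n) (x : Fin n → Pt) (hx : IsMinimizer r0 v2 v3 x) :
    energy r0 v2 v3 x ≤ ((-2 * (n : ℝ) + (⌈2 * Real.sqrt n⌉ : ℤ) : ℝ) : EReal) := by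
  classical
  set m := ⌈Real.sqrt n⌉₊ with hm
  have hm1 : 1 ≤ m := by
    rw [hm]
    exact Nat.one_le_ceil_iff.mpr (Real.sqrt_pos.mpr (by exact_mod_cast hn))
  have hmn : m ≤ n := by
    rw [hm]
    apply Nat.ceil_le.mpr
    calc Real.sqrt n ≤ Real.sqrt ((n:ℝ)^2) := by
          apply Real.sqrt_le_sqrt
          nlinarith [show (1:ℝ) ≤ (n:ℝ) from by exact_mod_cast hn]
      _ = (n:ℝ) := Real.sqrt_sq (by positivity)
  have hinj : Function.Injective (fun i : Fin n => MinUB.gpt m (i:ℕ)) := by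
    intro a b hab
    exact Fin.ext (MinUB.gpt_injective m hab)
  have h1 := hx.2 _ hinj
  have h2 := MinUB.energy_grid_le hv2 hv3 hr0' n m hn hm1
  refine h1.trans (h2.trans ?_)
  rw [EReal.coe_le_coe_iff]
  have hceil := MinUB.ceil_bound n hn
  rw [← hm] at hceil
  have hc : (((n-1)/m + m + 1 : ℕ) : ℝ) ≤ ((⌈2*Real.sqrt n⌉ : ℤ) : ℝ) := by
    have h' := (@Int.cast_le ℝ _ _ _).mpr hceil
    push_cast at h' ⊢
    exact h'
  have c1 : ((n-1 : ℕ) : ℝ) = (n:ℝ) - 1 := by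
    rw [Nat.cast_sub hn]; norm_num
  have c2 : ((n-m : ℕ) : ℝ) = (n:ℝ) - (m:ℝ) := by
    rw [Nat.cast_sub hmn]
  push_cast at hc
  rw [c1, c2]
  linarith

end
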